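/- arXiv:1301.0062 — 3 statements merged into one kernel-verified Lean document; each statement's English description precedes it below -/
import Mathlib

section
/- For every ε > 0 there exists M > 0 with the following property: for every h > 0 and every injective holomorphic function f on the open horizontal strip B_h = {z ∈ ℂ : |Im z| < h} satisfying f(z + 1) = f(z) + 1 for all z ∈ B_h, one has |f′(z) − 1| < ε for every z ∈ ℂ with |Im z| < h − M. -/
open Complex Metric Set

noncomputable section StripDistortionAux

lemma strip_cover_lemma {h : ℂ → ℂ} {p w : ℂ} {ρ b : ℝ} (hρ : 0 < ρ)
    (hc : ContinuousOn h (closedBall p ρ)) (hdiff : DifferentiableOn ℂ h (ball p ρ))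
    (hb : ‖h p - w‖ < b) (hsph : ∀ z ∈ sphere p ρ, b ≤ ‖h z - w‖) :
    ∃ z ∈ closedBall p ρ, h z = w := by
  by_contra hcon
  push_neg at hcon
  have hne : ∀ z ∈ closedBall p ρ, h z - w ≠ 0 := fun z hz => sub_ne_zero.2 (hcon z hz)
  have hb0 : 0 < b := lt_of_le_of_lt (norm_nonneg _) hb
  set g : ℂ → ℂ := fun z => (h z - w)⁻¹ with hgdef
  have hdc : DiffContOnCl ℂ g (ball p ρ) := by
    constructor
    · exact ((hdiff.sub_const w).inv
        (fun z hz => hne z (ball_subset_closedBall hz)))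
    · rw [closure_ball p hρ.ne']
      exact ((hc.sub continuousOn_const).inv₀ hne)
  have hle : ‖g p‖ ≤ b⁻¹ := by
    refine Complex.norm_le_of_forall_mem_frontier_norm_le isBounded_ball hdc ?_ ?_
    · intro z hz
      rw [frontier_ball p hρ.ne'] at hz
      have h1 : b ≤ ‖h z - w‖ := hsph z hz
      simp only [hgdef, norm_inv]
      exact inv_anti₀ hb0 h1
    · rw [closure_ball p hρ.ne']
      exact mem_closedBall_self hρ.le
  have hppos : 0 < ‖h p - w‖ := norm_pos_iff.2 (hne p (mem_closedBall_self hρ.le))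
  rw [hgdef] at hle
  simp only [norm_inv] at hle
  have := (inv_le_inv₀ hppos hb0).1 hle
  exact absurd hb (not_lt.2 this)

/-- Bloch-type theorem: the image of the closed unit disk under a holomorphic map contains a
disk of radius `‖deriv h 0‖ / 256`. -/

lemma strip_bloch {h : ℂ → ℂ} (hd : DifferentiableOn ℂ h (ball 0 2)) :
    ∃ w : ℂ, ball w (‖deriv h 0‖ / 256) ⊆ h '' closedBall 0 1 := by
  rcases eq_or_ne (deriv h 0) 0 with h0 | h0
  · exact ⟨0, by simp [h0]⟩
  have han : AnalyticOnNhd ℂ (deriv h) (ball (0:ℂ) 2) := (hd.analyticOnNhd isOpen_ball).deriv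
  have hdc : ContinuousOn (deriv h) (ball (0:ℂ) 2) := han.continuousOn
  have hsub : closedBall (0:ℂ) 1 ⊆ ball (0:ℂ) 2 := closedBall_subset_ball (by norm_num)
  set m := ‖deriv h 0‖ with hmdef
  have hm : 0 < m := norm_pos_iff.2 h0
  set φ : ℂ → ℝ := fun z => (1 - ‖z‖) * ‖deriv h z‖ with hφdef
  have hφc : ContinuousOn φ (closedBall 0 1) :=
    ((continuous_const.sub continuous_norm).continuousOn).mul ((hdc.mono hsub).norm)
  obtain ⟨p, hp, hmax⟩ := (isCompact_closedBall (0:ℂ) 1).exists_isMaxOn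
    ⟨0, mem_closedBall_self zero_le_one⟩ hφc
  have hφp : m ≤ φ p := by
    have h00 : (0:ℂ) ∈ closedBall (0:ℂ) 1 := mem_closedBall_self zero_le_one
    have := hmax h00
    simpa [hφdef] using this
  have hpnorm : ‖p‖ ≤ 1 := by simpa [mem_closedBall, dist_eq_norm] using hp
  have hp1 : ‖p‖ < 1 := by
    rcases lt_or_ge (‖p‖) 1 with h1 | h1
    · exact h1
    · exfalso
      have : φ p ≤ 0 := mul_nonpos_of_nonpos_of_nonneg (by linarith) (norm_nonneg _)
      linarith
  set t := (1 - ‖p‖) / 2 with htdef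
  have ht : 0 < t := by simp only [htdef]; linarith
  set c := deriv h p with hcdef
  have hφpt : φ p = 2 * t * ‖c‖ := by
    simp only [hφdef, htdef, hcdef]; ring
  have hc2t : m ≤ 2 * t * ‖c‖ := hφpt ▸ hφp
  have hcpos : 0 < ‖c‖ := by nlinarith
  -- ball p t inside closed unit ball
  have hballsub : ball p t ⊆ closedBall 0 1 := by
    intro z hz
    rw [mem_ball, dist_eq_norm] at hz
    rw [mem_closedBall, dist_zero_right]
    have hzn : ‖z‖ ≤ ‖z - p‖ + ‖p‖ := by simpa using norm_add_le (z - p) p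
    calc ‖z‖ ≤ ‖z - p‖ + ‖p‖ := hzn
    _ ≤ t + ‖p‖ := by linarith
    _ ≤ 1 := by simp only [htdef]; linarith
  have hball2 : ball p t ⊆ ball (0:ℂ) 2 := hballsub.trans hsub
  -- derivative bound on ball p t
  have hbnd : ∀ z ∈ ball p t, ‖deriv h z‖ ≤ 2 * ‖c‖ := by
    intro z hz
    have hz1 : z ∈ closedBall (0:ℂ) 1 := hballsub hz
    have h2 : φ z ≤ φ p := hmax hz1
    rw [mem_ball, dist_eq_norm] at hz
    have h1 : t ≤ 1 - ‖z‖ := by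
      have : ‖z‖ ≤ ‖z - p‖ + ‖p‖ := by simpa using norm_add_le (z - p) p
      simp only [htdef]; simp only [htdef] at hz ⊢; linarith
    have h3 : ‖deriv h z‖ * t ≤ φ z := by
      have := mul_le_mul_of_nonneg_left h1 (norm_nonneg (deriv h z))
      simpa [hφdef, mul_comm] using this
    rw [hφpt] at h2
    nlinarith
  have hdd : DifferentiableOn ℂ (deriv h) (ball p t) := han.differentiableOn.mono hball2
  have hmaps : MapsTo (deriv h) (ball p t) (ball (deriv h p) (5 * ‖c‖)) := by
    intro z hz
    rw [mem_ball, dist_eq_norm]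
    calc ‖deriv h z - deriv h p‖ ≤ ‖deriv h z‖ + ‖c‖ := by
          rw [← hcdef]; exact norm_sub_le _ _
    _ ≤ 2 * ‖c‖ + ‖c‖ := by linarith [hbnd z hz]
    _ < 5 * ‖c‖ := by linarith
  have hschwarz : ∀ z ∈ ball p t, ‖deriv h z - c‖ ≤ 5 * ‖c‖ / t * ‖z - p‖ := by
    intro z hz
    have hds := Complex.norm_dslope_le_div_of_mapsTo_ball hdd (hmaps.mono_right ball_subset_closedBall) hz
    rcases eq_or_ne z p with rfl | hne
    · simp [hcdef]
    · rw [dslope_of_ne _ hne, slope_def_field] at hds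
      have hzp : 0 < ‖z - p‖ := by
        rw [norm_pos_iff, sub_ne_zero]; exact hne
      rw [norm_div] at hds
      calc ‖deriv h z - c‖ = ‖deriv h z - c‖ / ‖z - p‖ * ‖z - p‖ :=
            (div_mul_cancel₀ _ hzp.ne').symm
      _ ≤ 5 * ‖c‖ / t * ‖z - p‖ := by
            exact mul_le_mul_of_nonneg_right hds (norm_nonneg _)
  set ρ := t / 40 with hρdef
  have hρ : 0 < ρ := by positivity
  have hcbsub : closedBall p ρ ⊆ ball p t := closedBall_subset_ball (by simp only [hρdef]; linarith)
  -- mean value estimate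
  have hmv : ∀ z ∈ closedBall p ρ, ‖h z - h p - c * (z - p)‖ ≤ ‖c‖ / 4 * ‖z - p‖ := by
    have key : ∀ x ∈ closedBall p ρ, HasDerivWithinAt (fun z => h z - c * z)
        (deriv h x - c) (closedBall p ρ) x := by
      intro x hx
      have hxball : x ∈ ball (0:ℂ) 2 := hball2 (hcbsub hx)
      have hdx : HasDerivAt h (deriv h x) x :=
        (hd.differentiableAt (isOpen_ball.mem_nhds hxball)).hasDerivAt
      have : HasDerivAt (fun z => h z - c * z) (deriv h x - c * 1) x :=
        hdx.sub ((hasDerivAt_id x).const_mul c)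
      simpa using this.hasDerivWithinAt
    have bound : ∀ x ∈ closedBall p ρ, ‖deriv h x - c‖ ≤ ‖c‖ / 4 := by
      intro x hx
      have h1 := hschwarz x (hcbsub hx)
      have h2 : ‖x - p‖ ≤ ρ := by
        rw [mem_closedBall, dist_eq_norm] at hx; exact hx
      calc ‖deriv h x - c‖ ≤ 5 * ‖c‖ / t * ‖x - p‖ := h1
      _ ≤ 5 * ‖c‖ / t * ρ := by
            exact mul_le_mul_of_nonneg_left h2 (by positivity)
      _ = ‖c‖ / 8 := by field_simp [hρdef]; ring
      _ ≤ ‖c‖ / 4 := by linarith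
    intro z hz
    have := (convex_closedBall p ρ).norm_image_sub_le_of_norm_hasDerivWithin_le key bound
      (mem_closedBall_self hρ.le) hz
    calc ‖h z - h p - c * (z - p)‖ = ‖(h z - c * z) - (h p - c * p)‖ := by ring_nf
    _ ≤ ‖c‖ / 4 * ‖z - p‖ := this
  refine ⟨h p, ?_⟩
  have hr : m / 256 ≤ 3 / 8 * ‖c‖ * ρ := by
    simp only [hρdef]
    nlinarith
  intro w hw
  rw [mem_ball, dist_eq_norm] at hw
  have hwp : ‖h p - w‖ < 3 / 8 * ‖c‖ * ρ := by
    rw [norm_sub_rev]; exact lt_of_lt_of_le hw hr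
  set b : ℝ := 3 / 4 * ‖c‖ * ρ - ‖h p - w‖ with hbdef
  have hcov : ∃ z ∈ closedBall p ρ, h z = w := by
    refine strip_cover_lemma (b := b) hρ (hd.continuousOn.mono (hcbsub.trans hball2))
      (hd.mono (ball_subset_closedBall.trans (hcbsub.trans hball2))) ?_ ?_
    · simp only [hbdef]; linarith
    · intro z hz
      have hzc : z ∈ closedBall p ρ := sphere_subset_closedBall hz
      have hmv1 := hmv z hzc
      have hzp : ‖z - p‖ = ρ := by
        rw [mem_sphere, dist_eq_norm] at hz; exact hz
      have e1 : c * (z - p) = (h z - w) - (h z - h p - c * (z - p)) - (h p - w) := by ring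
      have e2 : ‖c * (z - p)‖ ≤ ‖h z - w‖ + ‖h z - h p - c * (z - p)‖ + ‖h p - w‖ := by
        rw [congrArg norm e1]
        refine le_trans (norm_sub_le _ _) ?_
        linarith [norm_sub_le (h z - w) (h z - h p - c * (z - p))]
      have e3 : ‖c * (z - p)‖ = ‖c‖ * ρ := by rw [norm_mul, hzp]
      rw [hzp] at hmv1
      simp only [hbdef]
      nlinarith
  obtain ⟨z, hz, hzw⟩ := hcov
  exact ⟨z, hballsub (hcbsub hz), hzw⟩

lemma strip_isOpen (h : ℝ) : IsOpen {z : ℂ | |z.im| < h} := by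
  have : {z : ℂ | |z.im| < h} = Complex.im ⁻¹' (Set.Ioo (-h) h) := by
    ext z; simp [Set.mem_Ioo, abs_lt]
  rw [this]; exact isOpen_Ioo.preimage Complex.continuous_im

lemma strip_deriv_per {h : ℝ} {f : ℂ → ℂ}
    (hper : ∀ z ∈ {z : ℂ | |z.im| < h}, f (z + 1) = f z + 1)
    {z : ℂ} (hz : |z.im| < h) : deriv f (z + 1) = deriv f z := by
  have hev : (fun w => f (w + 1)) =ᶠ[nhds z] (fun w => f w + 1) := by
    filter_upwards [(strip_isOpen h).mem_nhds hz] with w hw using hper w hw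
  have h1 : deriv (fun w => f (w + 1)) z = deriv (fun w => f w + 1) z := hev.deriv_eq
  rwa [deriv_comp_add_const, deriv_add_const] at h1

lemma strip_deriv_per_int {h : ℝ} {f : ℂ → ℂ}
    (hper : ∀ z ∈ {z : ℂ | |z.im| < h}, f (z + 1) = f z + 1) :
    ∀ (n : ℤ) (z : ℂ), |z.im| < h → deriv f (z + (n : ℂ)) = deriv f z := by
  intro n
  induction n using Int.induction_on with
  | zero => simp
  | succ k ih =>
      intro z hz
      have him : |(z + (k : ℂ)).im| < h := by
        simpa using hz
      have h1 : z + ((k : ℤ) + 1 : ℤ) = (z + (k : ℂ)) + 1 := by push_cast; ring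
      rw [h1, strip_deriv_per hper him]
      exact ih z hz
  | pred k ih =>
      intro z hz
      have him : |(z + (-(k : ℂ) - 1)).im| < h := by
        simpa using hz
      have h2 := strip_deriv_per hper him
      have h3 : (z + (-(k : ℂ) - 1)) + 1 = z + (-(k : ℂ)) := by ring
      rw [h3] at h2
      have h4 : z + ((-(k : ℤ) - 1 : ℤ) : ℂ) = z + (-(k : ℂ) - 1) := by push_cast; ring
      rw [h4, ← h2]
      have h5 := ih z hz
      have h6 : ((-(k : ℤ) : ℤ) : ℂ) = -(k : ℂ) := by push_cast; ring
      rw [h6] at h5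
      exact h5

lemma strip_deriv_eq_of_int {h : ℝ} {f : ℂ → ℂ}
    (hper : ∀ z ∈ {z : ℂ | |z.im| < h}, f (z + 1) = f z + 1)
    {z w : ℂ} (hz : |z.im| < h) (n : ℤ) (hw : w = z + (n : ℂ)) :
    deriv f w = deriv f z := by
  subst hw; exact strip_deriv_per_int hper n z hz

/-- Step A: injectivity plus the translation relation bounds the derivative at depth `1/2`. -/

lemma strip_deriv_bound {h : ℝ} {f : ℂ → ℂ}
    (hd : DifferentiableOn ℂ f {z : ℂ | |z.im| < h})
    (hinj : Set.InjOn f {z : ℂ | |z.im| < h})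
    (hper : ∀ z ∈ {z : ℂ | |z.im| < h}, f (z + 1) = f z + 1)
    {z : ℂ} (hz : |z.im| < h - 1/2) :
    ‖deriv f z - 1‖ ≤ 1025 := by
  have hzh : |z.im| < h := by
    have : (0:ℝ) ≤ |z.im| := abs_nonneg _
    linarith
  have key : ‖deriv f z‖ ≤ 1024 := by
    by_contra hgt
    push_neg at hgt
    set φ : ℂ → ℂ := fun ζ => f (z + ζ/4) with hφdef
    have hmapsto : ∀ ζ : ℂ, ζ ∈ ball (0:ℂ) 2 → z + ζ/4 ∈ {w : ℂ | |w.im| < h} := by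
      intro ζ hζ
      rw [mem_ball, dist_zero_right] at hζ
      have h1 : |ζ.im| ≤ ‖ζ‖ := Complex.abs_im_le_norm ζ
      simp only [mem_setOf_eq, Complex.add_im]
      have h2 : |(ζ/4).im| < 1/2 := by
        have : (ζ/4).im = ζ.im / 4 := by simp [Complex.div_im]
        rw [this, abs_div]
        have : |(4:ℝ)| = 4 := by norm_num
        rw [this]
        linarith
      calc |z.im + (ζ/4).im| ≤ |z.im| + |(ζ/4).im| := abs_add_le _ _
      _ < (h - 1/2) + 1/2 := by linarith
      _ = h := by ring
    have hφd : DifferentiableOn ℂ φ (ball 0 2) := by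
      apply hd.comp
      · exact ((differentiable_id.div_const (4:ℂ)).const_add z).differentiableOn
      · intro ζ hζ; exact hmapsto ζ hζ
    have hdf : HasDerivAt f (deriv f z) z :=
      (hd.differentiableAt ((strip_isOpen h).mem_nhds hzh)).hasDerivAt
    have hinner : HasDerivAt (fun ζ : ℂ => z + ζ/4) (1/4 : ℂ) 0 := by
      simpa using ((hasDerivAt_id (0:ℂ)).div_const 4).const_add z
    have h00 : z + (0:ℂ)/4 = z := by ring
    have hcomp : HasDerivAt φ (deriv f z * (1/4)) 0 := by
      refine HasDerivAt.comp 0 ?_ hinner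
      rw [h00]; exact hdf
    have hderφ : deriv φ 0 = deriv f z * (1/4) := hcomp.deriv
    have hm : 256 < ‖deriv φ 0‖ := by
      rw [hderφ, norm_mul]
      have h14 : ‖(1/4 : ℂ)‖ = 1/4 := by norm_num
      rw [h14]; linarith
    obtain ⟨w, hball⟩ := strip_bloch hφd
    have hrad : 1 < ‖deriv φ 0‖ / 256 := by linarith [hm]
    have hw1 : w + 1/2 ∈ ball w (‖deriv φ 0‖ / 256) := by
      rw [mem_ball, dist_eq_norm]
      have : ‖(w + 1/2) - w‖ = 1/2 := by norm_num
      rw [this]; linarith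
    have hw2 : w - 1/2 ∈ ball w (‖deriv φ 0‖ / 256) := by
      rw [mem_ball, dist_eq_norm]
      have : ‖(w - 1/2) - w‖ = 1/2 := by
        have : (w - 1/2) - w = -(1/2 : ℂ) := by ring
        rw [this]; norm_num
      rw [this]; linarith
    obtain ⟨ζ₁, hζ₁, he₁⟩ := hball hw1
    obtain ⟨ζ₂, hζ₂, he₂⟩ := hball hw2
    have hb12 : closedBall (0:ℂ) 1 ⊆ ball (0:ℂ) 2 := closedBall_subset_ball (by norm_num)
    set x₁ := z + ζ₁/4 with hx₁
    set x₂ := z + ζ₂/4 with hx₂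
    have hx₁s : x₁ ∈ {w : ℂ | |w.im| < h} := hmapsto ζ₁ (hb12 hζ₁)
    have hx₂s : x₂ ∈ {w : ℂ | |w.im| < h} := hmapsto ζ₂ (hb12 hζ₂)
    have hx₂1s : x₂ + 1 ∈ {w : ℂ | |w.im| < h} := by
      simp only [mem_setOf_eq, Complex.add_im, Complex.one_im, add_zero]
      exact hx₂s
    have hfx : f x₁ = f (x₂ + 1) := by
      rw [hper x₂ hx₂s]
      have e1 : f x₁ = w + 1/2 := he₁
      have e2 : f x₂ = w - 1/2 := he₂
      rw [e1, e2]; ring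
    have heq : x₁ = x₂ + 1 := hinj hx₁s hx₂1s hfx
    have hdist : ‖x₁ - x₂‖ ≤ 1/2 := by
      have : x₁ - x₂ = (ζ₁ - ζ₂)/4 := by rw [hx₁, hx₂]; ring
      rw [this, norm_div]
      have h4 : ‖(4:ℂ)‖ = 4 := by norm_num
      rw [h4]
      have hn1 : ‖ζ₁‖ ≤ 1 := by simpa [dist_zero_right] using hζ₁
      have hn2 : ‖ζ₂‖ ≤ 1 := by simpa [dist_zero_right] using hζ₂
      have : ‖ζ₁ - ζ₂‖ ≤ 2 := le_trans (norm_sub_le _ _) (by linarith)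
      linarith
    rw [heq] at hdist
    simp only [add_sub_cancel_left] at hdist
    norm_num at hdist
  calc ‖deriv f z - 1‖ ≤ ‖deriv f z‖ + ‖(1:ℂ)‖ := norm_sub_le _ _
  _ ≤ 1024 + 1 := by rw [norm_one]; linarith
  _ = 1025 := by norm_num

noncomputable def stripG (f : ℂ → ℂ) (q : ℂ) : ℂ :=
  deriv f (Complex.log q / (2 * Real.pi * Complex.I)) - 1

lemma two_pi_I_ne_zero' : (2 * (Real.pi : ℂ) * Complex.I) ≠ 0 :=
  mul_ne_zero (mul_ne_zero two_ne_zero (Complex.ofReal_ne_zero.2 Real.pi_ne_zero))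
    Complex.I_ne_zero

lemma strip_im_div (w : ℂ) :
    (w / (2 * (Real.pi : ℂ) * Complex.I)).im = -w.re / (2 * Real.pi) := by
  have hπ : (Real.pi : ℝ) ≠ 0 := Real.pi_ne_zero
  rw [Complex.div_im]
  simp [Complex.normSq_apply]
  field_simp

lemma stripG_exp {h : ℝ} {f : ℂ → ℂ}
    (hper : ∀ z ∈ {z : ℂ | |z.im| < h}, f (z + 1) = f z + 1)
    {z : ℂ} (hz : |z.im| < h) :
    stripG f (Complex.exp (2 * Real.pi * Complex.I * z)) = deriv f z - 1 := by
  set q := Complex.exp (2 * (Real.pi:ℂ) * Complex.I * z) with hq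
  have hq0 : q ≠ 0 := Complex.exp_ne_zero _
  have hcancel : (2 * (Real.pi:ℂ) * Complex.I) * (Complex.log q / (2 * (Real.pi:ℂ) * Complex.I))
      = Complex.log q := by
    rw [mul_comm]; exact div_mul_cancel₀ _ two_pi_I_ne_zero'
  have hexp : Complex.exp ((2 * (Real.pi:ℂ) * Complex.I) *
      (Complex.log q / (2 * (Real.pi:ℂ) * Complex.I))) =
      Complex.exp (2 * (Real.pi:ℂ) * Complex.I * z) := by
    rw [hcancel, Complex.exp_log hq0]
  obtain ⟨n, hn⟩ := Complex.exp_eq_exp_iff_exists_int.mp hexp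
  have hzz : Complex.log q / (2 * (Real.pi:ℂ) * Complex.I) = z + n := by
    have h2 : Complex.log q = (2 * (Real.pi:ℂ) * Complex.I) * (z + n) := by
      rw [← hcancel, hn]; ring
    rw [h2, mul_div_cancel_left₀ _ two_pi_I_ne_zero']
  unfold stripG
  rw [strip_deriv_eq_of_int hper hz n hzz]

lemma stripG_diff {h : ℝ} {f : ℂ → ℂ}
    (hd : DifferentiableOn ℂ f {z : ℂ | |z.im| < h})
    (hper : ∀ z ∈ {z : ℂ | |z.im| < h}, f (z + 1) = f z + 1)
    {a : ℝ} (ha : a < h) {q : ℂ}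
    (h1 : Real.exp (-(2 * Real.pi * a)) < ‖q‖)
    (h2 : ‖q‖ < Real.exp (2 * Real.pi * a)) :
    DifferentiableAt ℂ (stripG f) q := by
  have hπ : (0:ℝ) < Real.pi := Real.pi_pos
  have hqpos : 0 < ‖q‖ := lt_trans (Real.exp_pos _) h1
  have hq0 : q ≠ 0 := by
    intro e; rw [e] at hqpos; simp at hqpos
  -- bound on log of modulus, for any q' in a given annulus
  have habs' : ∀ (b : ℝ) (q' : ℂ), Real.exp (-(2 * Real.pi * b)) < ‖q'‖ →
      ‖q'‖ < Real.exp (2 * Real.pi * b) →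
      |Real.log (‖q'‖)| < 2 * Real.pi * b := by
    intro b q' hb1 hb2
    have hq'pos : 0 < ‖q'‖ := lt_trans (Real.exp_pos _) hb1
    rw [abs_lt]
    constructor
    · exact (Real.lt_log_iff_exp_lt hq'pos).2 hb1
    · exact (Real.log_lt_iff_lt_exp hq'pos).2 hb2
  set z₀ := Complex.log q / (2 * (Real.pi:ℂ) * Complex.I) with hz₀
  have him0 : ∀ q' : ℂ, (Complex.log q' / (2 * (Real.pi:ℂ) * Complex.I)).im =
      -Real.log (‖q'‖) / (2 * Real.pi) := by
    intro q'; rw [strip_im_div, Complex.log_re]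
  have himlt : ∀ (b : ℝ) (q' : ℂ), b < h → Real.exp (-(2 * Real.pi * b)) < ‖q'‖ →
      ‖q'‖ < Real.exp (2 * Real.pi * b) →
      |(Complex.log q' / (2 * (Real.pi:ℂ) * Complex.I)).im| < h := by
    intro b q' hbh hb1 hb2
    rw [him0, abs_div, abs_neg, abs_of_pos (by linarith : (0:ℝ) < 2 * Real.pi)]
    have := habs' b q' hb1 hb2
    rw [div_lt_iff₀ (by linarith : (0:ℝ) < 2 * Real.pi)]
    calc |Real.log (‖q'‖)| < 2 * Real.pi * b := this
    _ ≤ h * (2 * Real.pi) := by nlinarith [abs_nonneg (Real.log (‖q'‖))]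
  have hz₀h : |z₀.im| < h := himlt a q ha h1 h2
  set L : ℂ → ℂ := fun q' => z₀ + Complex.log (q'/q) / (2 * (Real.pi:ℂ) * Complex.I) with hL
  have hLq : L q = z₀ := by
    show z₀ + Complex.log (q/q) / (2 * (Real.pi:ℂ) * Complex.I) = z₀
    rw [div_self hq0, Complex.log_one, zero_div, add_zero]
  have hLdiff : DifferentiableAt ℂ L q := by
    have h1 : DifferentiableAt ℂ (fun q' : ℂ => q' / q) q := differentiableAt_id.div_const q
    have hlog : DifferentiableAt ℂ Complex.log (q / q) := by
      rw [div_self hq0]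
      exact Complex.differentiableAt_log (by simp [Complex.mem_slitPlane_iff])
    have h2' := DifferentiableAt.comp (g := Complex.log) (f := fun q' : ℂ => q' / q) q hlog h1
    have h2 : DifferentiableAt ℂ (fun q' : ℂ => Complex.log (q' / q)) q := by
      exact h2'
    exact (h2.div_const _).const_add z₀
  -- the eventual equality
  set a' : ℝ := (a + h) / 2 with ha'
  have haa' : a < a' := by simp only [ha']; linarith
  have ha'h : a' < h := by simp only [ha']; linarith
  have hV : ∀ᶠ q' in nhds q, q' ∈ (norm : ℂ → ℝ) ⁻¹'
      (Set.Ioo (Real.exp (-(2 * Real.pi * a'))) (Real.exp (2 * Real.pi * a'))) := by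
    refine (continuous_norm.continuousAt).eventually_mem ?_
    refine (isOpen_Ioo).mem_nhds ?_
    constructor
    · exact lt_trans (Real.exp_lt_exp.2 (by nlinarith)) h1
    · exact lt_trans h2 (Real.exp_lt_exp.2 (by nlinarith))
  have hLev : ∀ᶠ q' in nhds q, |(L q').im| < h := by
    have hc : ContinuousAt (fun q' => (L q').im) q :=
      Complex.continuous_im.continuousAt.comp hLdiff.continuousAt
    have : ∀ᶠ q' in nhds q, L q' ∈ {w : ℂ | |w.im| < h} := by
      refine hLdiff.continuousAt.eventually_mem ?_
      rw [hLq] at *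
      exact (strip_isOpen h).mem_nhds hz₀h
    filter_upwards [this] with q' hq' using hq'
  have hev : stripG f =ᶠ[nhds q] fun q' => deriv f (L q') - 1 := by
    filter_upwards [hV, hLev] with q' hq'V hq'L
    simp only [Set.mem_preimage, Set.mem_Ioo] at hq'V
    have hq'pos : 0 < ‖q'‖ := lt_trans (Real.exp_pos _) hq'V.1
    have hq'0 : q' ≠ 0 := by intro e; rw [e] at hq'pos; simp at hq'pos
    set z₁ := Complex.log q' / (2 * (Real.pi:ℂ) * Complex.I) with hz₁
    have hz₁h : |z₁.im| < h := himlt a' q' ha'h hq'V.1 hq'V.2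
    have hcancel1 : (2 * (Real.pi:ℂ) * Complex.I) * z₁ = Complex.log q' := by
      rw [hz₁, mul_comm]; exact div_mul_cancel₀ _ two_pi_I_ne_zero'
    have hexp1 : Complex.exp ((2 * (Real.pi:ℂ) * Complex.I) * z₁) = q' := by
      rw [hcancel1, Complex.exp_log hq'0]
    have hexp2 : Complex.exp ((2 * (Real.pi:ℂ) * Complex.I) * L q') = q' := by
      have hsplit : (2 * (Real.pi:ℂ) * Complex.I) * L q'
          = (2 * (Real.pi:ℂ) * Complex.I) * z₀ + Complex.log (q'/q) := by
        show (2 * (Real.pi:ℂ) * Complex.I) * (z₀ + Complex.log (q'/q) / (2 * (Real.pi:ℂ) * Complex.I))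
          = (2 * (Real.pi:ℂ) * Complex.I) * z₀ + Complex.log (q'/q)
        rw [mul_add, mul_comm (2 * (Real.pi:ℂ) * Complex.I)
          (Complex.log (q'/q) / (2 * (Real.pi:ℂ) * Complex.I)),
          div_mul_cancel₀ _ two_pi_I_ne_zero']
      rw [hsplit, Complex.exp_add]
      have e1 : Complex.exp ((2 * (Real.pi:ℂ) * Complex.I) * z₀) = q := by
        have : (2 * (Real.pi:ℂ) * Complex.I) * z₀ = Complex.log q := by
          rw [hz₀, mul_comm]; exact div_mul_cancel₀ _ two_pi_I_ne_zero'
        rw [this, Complex.exp_log hq0]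
      rw [e1, Complex.exp_log (div_ne_zero hq'0 hq0)]
      field_simp
    have hee : Complex.exp ((2 * (Real.pi:ℂ) * Complex.I) * z₁)
        = Complex.exp ((2 * (Real.pi:ℂ) * Complex.I) * L q') := by rw [hexp1, hexp2]
    obtain ⟨n, hn⟩ := Complex.exp_eq_exp_iff_exists_int.mp hee
    have hz₁L : z₁ = L q' + n := by
      have h2 : (2 * (Real.pi:ℂ) * Complex.I) * z₁
          = (2 * (Real.pi:ℂ) * Complex.I) * (L q' + n) := by rw [hn]; ring
      exact mul_left_cancel₀ two_pi_I_ne_zero' h2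
    show deriv f z₁ - 1 = deriv f (L q') - 1
    rw [strip_deriv_eq_of_int hper hq'L n hz₁L]
  refine hev.differentiableAt_iff.mpr ?_
  have han : AnalyticOnNhd ℂ (deriv f) {z : ℂ | |z.im| < h} :=
    (hd.analyticOnNhd (strip_isOpen h)).deriv
  have hdf : DifferentiableAt ℂ (deriv f) (L q) := by
    rw [hLq]; exact (han z₀ hz₀h).differentiableAt
  exact (hdf.comp q hLdiff).sub_const 1

lemma strip_zero_coeff {h : ℝ} {f : ℂ → ℂ}
    (hd : DifferentiableOn ℂ f {z : ℂ | |z.im| < h})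
    (hper : ∀ z ∈ {z : ℂ | |z.im| < h}, f (z + 1) = f z + 1)
    {Y : ℝ} (hY0 : 0 < Y) (hYh : Y < h) :
    (∮ ζ in C(0, Real.exp (2 * Real.pi * Y)), ζ⁻¹ • stripG f ζ) = 0 := by
  have hπ : (0:ℝ) < Real.pi := Real.pi_pos
  have hπc : (2 * (Real.pi:ℂ)) ≠ 0 :=
    mul_ne_zero two_ne_zero (Complex.ofReal_ne_zero.2 Real.pi_ne_zero)
  set R : ℝ := Real.exp (2 * Real.pi * Y) with hR
  have hR0 : (0:ℝ) < R := Real.exp_pos _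
  set e : ℝ → ℂ := fun θ => (θ:ℂ) / (2 * Real.pi) - (Y:ℂ) * Complex.I with he
  have heim : ∀ θ : ℝ, (e θ).im = -Y := by
    intro θ
    simp [he, Complex.div_im, Complex.div_re]
  have hestrip : ∀ θ : ℝ, e θ ∈ {z : ℂ | |z.im| < h} := by
    intro θ
    simp only [mem_setOf_eq, heim θ, abs_neg, abs_of_pos hY0]
    exact hYh
  -- the integrand simplifies
  have key : ∀ θ : ℝ, deriv (circleMap 0 R) θ •
      ((circleMap 0 R θ)⁻¹ • stripG f (circleMap 0 R θ))
      = Complex.I * (deriv f (e θ) - 1) := by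
    intro θ
    have hne : circleMap 0 R θ ≠ 0 := by
      intro hzero
      have := norm_circleMap_zero R θ
      rw [hzero] at this
      simp only [norm_zero] at this
      rw [abs_of_pos hR0] at this
      linarith
    have hform : circleMap 0 R θ = Complex.exp (2 * Real.pi * Complex.I * e θ) := by
      rw [circleMap_zero]
      have harg : (2 * (Real.pi:ℂ) * Complex.I) * e θ = (θ:ℂ) * Complex.I + (2 * Real.pi * Y : ℝ) := by
        simp only [he]
        field_simp
        ring_nf
        rw [Complex.I_sq]
        push_cast; ring
      rw [harg, Complex.exp_add]
      rw [Complex.ofReal_exp]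
      ring
    have hGval : stripG f (circleMap 0 R θ) = deriv f (e θ) - 1 := by
      rw [hform]
      exact stripG_exp hper (hestrip θ)
    rw [deriv_circleMap, hGval]
    rw [smul_eq_mul, smul_eq_mul]
    calc circleMap 0 R θ * Complex.I * ((circleMap 0 R θ)⁻¹ * (deriv f (e θ) - 1))
        = (circleMap 0 R θ * (circleMap 0 R θ)⁻¹) * Complex.I * (deriv f (e θ) - 1) := by ring
    _ = Complex.I * (deriv f (e θ) - 1) := by rw [mul_inv_cancel₀ hne]; ring
  -- continuity of deriv f on the strip
  have han : AnalyticOnNhd ℂ (deriv f) {z : ℂ | |z.im| < h} :=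
    (hd.analyticOnNhd (strip_isOpen h)).deriv
  have hcont : ContinuousOn (deriv f) {z : ℂ | |z.im| < h} := han.continuousOn
  have hecont : Continuous e := by
    simp only [he]
    fun_prop
  have hcomp : Continuous fun θ : ℝ => deriv f (e θ) :=
    hcont.comp_continuous hecont hestrip
  -- FTC
  have hftc : ∫ θ in (0:ℝ)..(2 * Real.pi), deriv f (e θ) * (1 / (2 * Real.pi) : ℂ) = 1 := by
    have hu : ∀ θ ∈ Set.uIcc (0:ℝ) (2 * Real.pi),
        HasDerivAt (fun θ : ℝ => f (e θ)) (deriv f (e θ) * (1 / (2 * Real.pi) : ℂ)) θ := by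
      intro θ _
      have hdf : HasDerivAt f (deriv f (e θ)) (e θ) :=
        (hd.differentiableAt ((strip_isOpen h).mem_nhds (hestrip θ))).hasDerivAt
      have hinner : HasDerivAt (fun w : ℂ => w / (2 * Real.pi) - (Y:ℂ) * Complex.I)
          (1 / (2 * Real.pi) : ℂ) (θ:ℂ) := by
        simpa using ((hasDerivAt_id ((θ:ℝ):ℂ)).div_const (2 * Real.pi)).sub_const ((Y:ℂ) * Complex.I)
      have hcomp2 : HasDerivAt (fun w : ℂ => f (w / (2 * Real.pi) - (Y:ℂ) * Complex.I))
          (deriv f (e θ) * (1 / (2 * Real.pi) : ℂ)) (θ:ℂ) := by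
        refine HasDerivAt.comp _ ?_ hinner
        exact hdf
      exact hcomp2.comp_ofReal
    have hint : IntervalIntegrable (fun θ : ℝ => deriv f (e θ) * (1 / (2 * Real.pi) : ℂ))
        MeasureTheory.volume 0 (2 * Real.pi) :=
      (hcomp.mul continuous_const).intervalIntegrable _ _
    rw [intervalIntegral.integral_eq_sub_of_hasDerivAt hu hint]
    have he2π : e (2 * Real.pi) = 1 - (Y:ℂ) * Complex.I := by
      simp only [he]
      push_cast
      rw [div_self hπc]
    have he0 : e 0 = -((Y:ℂ) * Complex.I) := by
      simp only [he]; push_cast; ring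
    rw [he2π, he0]
    have hmem : -((Y:ℂ) * Complex.I) ∈ {z : ℂ | |z.im| < h} := by
      have := hestrip 0
      rwa [he0] at this
    have hper0 := hper _ hmem
    have : (1 : ℂ) - (Y:ℂ) * Complex.I = -((Y:ℂ) * Complex.I) + 1 := by ring
    rw [this, hper0]
    ring
  -- put everything together
  rw [circleIntegral]
  rw [intervalIntegral.integral_congr (fun θ _ => key θ)]
  rw [intervalIntegral.integral_const_mul]
  have hsplit : ∫ θ in (0:ℝ)..(2 * Real.pi), (deriv f (e θ) - 1)
      = (∫ θ in (0:ℝ)..(2 * Real.pi), deriv f (e θ)) - ∫ θ in (0:ℝ)..(2 * Real.pi), (1:ℂ) := by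
    apply intervalIntegral.integral_sub
    · exact hcomp.intervalIntegrable _ _
    · exact intervalIntegrable_const
  rw [hsplit]
  have h1 : ∫ θ in (0:ℝ)..(2 * Real.pi), deriv f (e θ) = 2 * Real.pi := by
    have h2 : ∫ θ in (0:ℝ)..(2 * Real.pi), deriv f (e θ) * (1 / (2 * Real.pi) : ℂ)
        = (∫ θ in (0:ℝ)..(2 * Real.pi), deriv f (e θ)) * (1 / (2 * Real.pi) : ℂ) :=
      intervalIntegral.integral_mul_const _ _
    rw [h2] at hftc
    field_simp at hftc
    exact hftc
  rw [h1]
  rw [intervalIntegral.integral_const]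
  simp

lemma strip_cauchy {G : ℂ → ℂ} {r R r2 R2 : ℝ} {q : ℂ}
    (hr2 : 0 < r2) (h21 : r2 < r) (hrq : r < ‖q‖) (hqR : ‖q‖ < R)
    (hR2 : R < R2)
    (hGd : ∀ w : ℂ, r2 < ‖w‖ → ‖w‖ < R2 → DifferentiableAt ℂ G w) :
    (2 * Real.pi * Complex.I : ℂ) * G q
      = (∮ ζ in C(0, R), (ζ - q)⁻¹ • G ζ) - ∮ ζ in C(0, r), (ζ - q)⁻¹ • G ζ := by
  have hr0 : 0 < r := lt_trans hr2 h21
  have hq0 : 0 < ‖q‖ := lt_trans hr0 hrq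
  have hR0 : 0 < R := lt_trans hq0 hqR
  set A : Set ℂ := ball (0:ℂ) R2 \ closedBall 0 r2 with hA
  have hAopen : IsOpen A := isOpen_ball.sdiff Metric.isClosed_closedBall
  have hmemA : ∀ w : ℂ, r2 < ‖w‖ → ‖w‖ < R2 → w ∈ A := by
    intro w h1 h2
    refine ⟨?_, ?_⟩
    · rw [mem_ball, dist_zero_right]; exact h2
    · rw [mem_closedBall, dist_zero_right]; exact not_le.2 h1
  have hGA : DifferentiableOn ℂ G A := by
    intro w hw
    have h2 : ‖w‖ < R2 := by
      have := hw.1; rwa [mem_ball, dist_zero_right] at this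
    have h1 : r2 < ‖w‖ := by
      have := hw.2; rw [mem_closedBall, dist_zero_right] at this
      exact not_le.1 this
    exact (hGd w h1 h2).differentiableWithinAt
  have hqA : q ∈ A := hmemA q (lt_trans h21 hrq) (lt_trans hqR hR2)
  set F := dslope G q with hF
  have hFd : DifferentiableOn ℂ F A :=
    (Complex.differentiableOn_dslope (hAopen.mem_nhds hqA)).mpr hGA
  have hsub1 : closedBall (0:ℂ) R \ ball 0 r ⊆ A := by
    intro w hw
    have h2 : ‖w‖ ≤ R := by
      have := hw.1; rwa [mem_closedBall, dist_zero_right] at this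
    have h1 : r ≤ ‖w‖ := by
      have := hw.2; rw [mem_ball, dist_zero_right] at this
      exact not_lt.1 this
    exact hmemA w (lt_of_lt_of_le h21 h1) (lt_of_le_of_lt h2 hR2)
  have heq : (∮ ζ in C(0, R), F ζ) = ∮ ζ in C(0, r), F ζ := by
    refine Complex.circleIntegral_eq_of_differentiable_on_annulus_off_countable hr0
      (le_of_lt (lt_trans hrq hqR)) countable_empty (hFd.continuousOn.mono hsub1) ?_
    intro w hw
    have hw' : w ∈ closedBall (0:ℂ) R \ ball 0 r :=
      ⟨ball_subset_closedBall hw.1.1, fun hmem => hw.1.2 (ball_subset_closedBall hmem)⟩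
    exact hFd.differentiableAt (hAopen.mem_nhds (hsub1 hw'))
  have hGc : ∀ ρ : ℝ, r2 < ρ → ρ < R2 → ContinuousOn G (sphere (0:ℂ) ρ) := by
    intro ρ h1 h2
    apply hGA.continuousOn.mono
    intro w hw
    rw [mem_sphere, dist_zero_right] at hw
    exact hmemA w (by rw [hw]; exact h1) (by rw [hw]; exact h2)
  have hdecomp : ∀ ρ : ℝ, 0 < ρ → r2 < ρ → ρ < R2 → ‖q‖ ≠ ρ →
      (∮ ζ in C(0, ρ), F ζ) = (∮ ζ in C(0, ρ), (ζ - q)⁻¹ • G ζ)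
        - (∮ ζ in C(0, ρ), (ζ - q)⁻¹) • G q := by
    intro ρ hρ0 hρ1 hρ2 hρq
    have hnz : ∀ ζ ∈ sphere (0:ℂ) ρ, ζ - q ≠ 0 := by
      intro ζ hζ e
      rw [mem_sphere, dist_zero_right] at hζ
      have hzq : ζ = q := sub_eq_zero.1 e
      rw [hzq] at hζ
      exact hρq hζ
    have hker : ContinuousOn (fun ζ : ℂ => (ζ - q)⁻¹) (sphere (0:ℂ) ρ) :=
      (continuousOn_id.sub continuousOn_const).inv₀ hnz
    have hint1 : CircleIntegrable (fun ζ => (ζ - q)⁻¹ • G ζ) 0 ρ :=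
      (hker.smul (hGc ρ hρ1 hρ2)).circleIntegrable hρ0.le
    have hint2 : CircleIntegrable (fun ζ => (ζ - q)⁻¹ • G q) 0 ρ :=
      (hker.smul continuousOn_const).circleIntegrable hρ0.le
    have hcongr : EqOn F (fun ζ => (ζ - q)⁻¹ • G ζ - (ζ - q)⁻¹ • G q) (sphere (0:ℂ) ρ) := by
      intro ζ hζ
      have hζq : ζ ≠ q := fun e => (hnz ζ hζ) (by rw [e, sub_self])
      rw [hF, dslope_of_ne _ hζq, slope_def_field]
      simp only [smul_eq_mul, div_eq_inv_mul, mul_sub]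
    rw [circleIntegral.integral_congr hρ0.le hcongr]
    rw [circleIntegral.integral_sub hint1 hint2]
    congr 1
    exact circleIntegral.integral_smul_const _ _ _ _
  have houter := hdecomp R hR0 (lt_trans h21 (lt_trans hrq hqR)) hR2 (ne_of_lt hqR)
  have hinner := hdecomp r hr0 h21 (lt_trans (lt_trans hrq hqR) hR2) (ne_of_gt hrq)
  have hker2 : (∮ ζ in C(0, R), (ζ - q)⁻¹) = 2 * Real.pi * Complex.I :=
    circleIntegral.integral_sub_inv_of_mem_ball
      (by rw [mem_ball, dist_zero_right]; exact hqR)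
  have hker3 : (∮ ζ in C(0, r), (ζ - q)⁻¹) = 0 := by
    refine Complex.circleIntegral_eq_zero_of_differentiable_on_off_countable hr0.le
      countable_empty ?_ ?_
    · refine (continuousOn_id.sub continuousOn_const).inv₀ ?_
      intro w hw e
      rw [mem_closedBall, dist_zero_right] at hw
      have hwq : w = q := sub_eq_zero.1 e
      rw [hwq] at hw
      linarith
    · intro w hw
      have hw' : ‖w‖ < r := by
        have := hw.1; rwa [mem_ball, dist_zero_right] at this
      refine (differentiableAt_id.sub_const q).inv ?_
      intro e
      have hwq : w = q := sub_eq_zero.1 e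
      rw [hwq] at hw'
      linarith
  rw [houter, hinner, hker2, hker3, zero_smul, sub_zero, smul_eq_mul] at heq
  linear_combination -heq

end StripDistortionAux

set_option maxHeartbeats 1000000 in
/-- Lifted distortion lemma: for every `ε > 0` there exists `M > 0` such that for every
`h > 0` and every injective holomorphic function `f` on the strip `{z : |Im z| < h}`
satisfying `f (z + 1) = f z + 1`, one has `|f' z - 1| < ε` whenever `|Im z| < h - M`. -/
theorem strip_distortion_lemma :
    ∀ ε : ℝ, 0 < ε → ∃ M : ℝ, 0 < M ∧ ∀ h : ℝ, 0 < h → ∀ f : ℂ → ℂ,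
      DifferentiableOn ℂ f {z : ℂ | |z.im| < h} →
      Set.InjOn f {z : ℂ | |z.im| < h} →
      (∀ z ∈ {z : ℂ | |z.im| < h}, f (z + 1) = f z + 1) →
      ∀ z : ℂ, |z.im| < h - M → ‖deriv f z - 1‖ < ε := by
  intro ε hε
  have hπ : (0:ℝ) < Real.pi := Real.pi_pos
  set L : ℝ := Real.log (4100 / ε + 1) with hLdef
  have hL0 : 0 ≤ L := Real.log_nonneg (by
    have : (0:ℝ) < 4100 / ε := by positivity
    linarith)
  set M : ℝ := 7/4 + L / (2 * Real.pi) with hMdef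
  have hLdiv : 0 ≤ L / (2 * Real.pi) := by positivity
  have hLkey : Real.exp L = 4100 / ε + 1 := Real.exp_log (by positivity)
  have hM0 : 0 < M := by
    simp only [hMdef]; linarith
  have hMkey : 2 * Real.pi * (M - 3/4) = 2 * Real.pi + L := by
    simp only [hMdef]; field_simp; ring
  have hM74 : (7/4 : ℝ) ≤ M := by
    simp only [hMdef]; linarith
  clear_value L
  clear_value M
  refine ⟨M, hM0, ?_⟩
  intro h hh f hd hinj hper z hz
  have habs0 : (0:ℝ) ≤ |z.im| := abs_nonneg _
  have hMh : M < h := by linarith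
  -- depth bound
  have B1 : ∀ w : ℂ, |w.im| < h - 1/2 → ‖deriv f w - 1‖ ≤ 1025 :=
    fun w hw => strip_deriv_bound hd hinj hper hw
  set Y : ℝ := h - 3/4 with hYdef
  have hY0 : 0 < Y := by simp only [hYdef]; linarith
  have hYh : Y < h := by simp only [hYdef]; linarith
  have hzY : |z.im| < Y - 1 := by
    simp only [hYdef]; linarith
  set a2 : ℝ := h - 1/2 with ha2def
  set r2 : ℝ := Real.exp (-(2 * Real.pi * a2)) with hr2def
  set R2 : ℝ := Real.exp (2 * Real.pi * a2) with hR2def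
  set r : ℝ := Real.exp (-(2 * Real.pi * Y)) with hrdef
  set R : ℝ := Real.exp (2 * Real.pi * Y) with hRdef
  set q : ℂ := Complex.exp (2 * Real.pi * Complex.I * z) with hqdef
  have hre : (2 * (Real.pi:ℂ) * Complex.I * z).re = -(2 * Real.pi * z.im) := by
    simp [Complex.mul_re, Complex.mul_im]
  have hA : ‖q‖ = Real.exp (-(2 * Real.pi * z.im)) := by
    rw [hqdef, Complex.norm_exp, hre]
  set A : ℝ := Real.exp (-(2 * Real.pi * z.im)) with hAdef
  have hzimY : -Y < z.im ∧ z.im < Y := by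
    constructor <;> [linarith [neg_abs_le z.im]; linarith [le_abs_self z.im]]
  have h2π : (0:ℝ) < 2 * Real.pi := by positivity
  have hrA : r < A := by
    rw [hrdef, hAdef]
    refine Real.exp_lt_exp.2 (neg_lt_neg ?_)
    exact mul_lt_mul_of_pos_left hzimY.2 h2π
  have hAR : A < R := by
    rw [hAdef, hRdef]
    refine Real.exp_lt_exp.2 ?_
    have h := mul_lt_mul_of_pos_left hzimY.1 h2π
    rw [mul_neg] at h
    linarith
  have hr2r : r2 < r := by
    rw [hr2def, hrdef]
    refine Real.exp_lt_exp.2 (neg_lt_neg ?_)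
    refine mul_lt_mul_of_pos_left ?_ h2π
    simp only [ha2def, hYdef]; linarith
  have hRR2 : R < R2 := by
    rw [hRdef, hR2def]
    refine Real.exp_lt_exp.2 ?_
    refine mul_lt_mul_of_pos_left ?_ h2π
    simp only [ha2def, hYdef]; linarith
  have hr20 : 0 < r2 := Real.exp_pos _
  have hr0 : 0 < r := Real.exp_pos _
  have hR0 : 0 < R := Real.exp_pos _
  have hA0 : 0 < A := Real.exp_pos _
  set G : ℂ → ℂ := stripG f with hGdef
  have hGd : ∀ w : ℂ, r2 < ‖w‖ → ‖w‖ < R2 → DifferentiableAt ℂ G w :=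
    fun w h1 h2 => stripG_diff hd hper (show a2 < h by simp only [ha2def]; linarith) h1 h2
  have hArw : ‖q‖ = A := hA
  have hrq' : r < ‖q‖ := by rw [hArw]; exact hrA
  have hqR' : ‖q‖ < R := by rw [hArw]; exact hAR
  have hcauchy := strip_cauchy hr20 hr2r hrq' hqR' hRR2 hGd
  have hzero : (∮ ζ in C(0, R), ζ⁻¹ • G ζ) = 0 := strip_zero_coeff hd hper hY0 hYh
  -- bound on G on the two circles
  have hGbound : ∀ w : ℂ, w ≠ 0 → |Real.log (‖w‖)| ≤ 2 * Real.pi * Y →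
      ‖G w‖ ≤ 1025 := by
    intro w hw0 hwlog
    have him : |(Complex.log w / (2 * (Real.pi:ℂ) * Complex.I)).im| < h - 1/2 := by
      rw [strip_im_div, Complex.log_re, abs_div, abs_neg,
        abs_of_pos (by linarith : (0:ℝ) < 2 * Real.pi)]
      rw [div_lt_iff₀ (by linarith : (0:ℝ) < 2 * Real.pi)]
      calc |Real.log (‖w‖)| ≤ 2 * Real.pi * Y := hwlog
      _ = Y * (2 * Real.pi) := by ring
      _ < (h - 1/2) * (2 * Real.pi) := by
            refine mul_lt_mul_of_pos_right ?_ h2π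
            simp only [hYdef]; linarith
    exact B1 _ him
  have hGsphR : ∀ ζ : ℂ, ‖ζ‖ = R → ‖G ζ‖ ≤ 1025 := by
    intro ζ hζ
    have hζ0 : ζ ≠ 0 := by
      intro e; rw [e] at hζ; simp at hζ; linarith
    apply hGbound ζ hζ0
    rw [hζ, hRdef, Real.log_exp]
    rw [_root_.abs_of_nonneg (by positivity : (0:ℝ) ≤ 2 * Real.pi * Y)]
  have hGsphr : ∀ ζ : ℂ, ‖ζ‖ = r → ‖G ζ‖ ≤ 1025 := by
    intro ζ hζ
    have hζ0 : ζ ≠ 0 := by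
      intro e; rw [e] at hζ; simp at hζ; linarith
    apply hGbound ζ hζ0
    rw [hζ, hrdef, Real.log_exp, abs_neg,
      _root_.abs_of_nonneg (by positivity : (0:ℝ) ≤ 2 * Real.pi * Y)]
  -- key exponential inequalities
  have hRA4100 : (4100 / ε) * A ≤ R - A := by
    have h1 : Real.exp L * A ≤ R := by
      rw [hAdef, hRdef, ← Real.exp_add]
      apply Real.exp_le_exp.2
      have hstep : M - 3/4 ≤ Y + z.im := by
        have := neg_abs_le z.im
        simp only [hYdef]
        linarith
      have hmul := mul_le_mul_of_nonneg_left hstep h2π.le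
      rw [hMkey, mul_add] at hmul
      linarith
    rw [hLkey] at h1
    have hexpand : (4100 / ε + 1) * A = (4100 / ε) * A + A := by ring
    rw [hexpand] at h1
    linarith
  have hAr4100 : (4100 / ε) * r ≤ A - r := by
    have h1 : Real.exp L * r ≤ A := by
      rw [hAdef, hrdef, ← Real.exp_add]
      apply Real.exp_le_exp.2
      have hstep : M - 3/4 ≤ Y - z.im := by
        have := le_abs_self z.im
        simp only [hYdef]
        linarith
      have hmul := mul_le_mul_of_nonneg_left hstep h2π.le
      rw [hMkey, mul_sub] at hmul
      linarith
    rw [hLkey] at h1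
    have hexpand : (4100 / ε + 1) * r = (4100 / ε) * r + r := by ring
    rw [hexpand] at h1
    linarith
  have hb1 : A / (R - A) ≤ ε / 4100 := by
    have hpos : 0 < (4100 / ε) * A := by positivity
    have h2 : A / (R - A) ≤ A / ((4100 / ε) * A) :=
      div_le_div_of_nonneg_left hA0.le hpos hRA4100
    calc A / (R - A) ≤ A / ((4100 / ε) * A) := h2
    _ = ε / 4100 := by field_simp
  have hb2 : r / (A - r) ≤ ε / 4100 := by
    have hpos : 0 < (4100 / ε) * r := by positivity
    have h2 : r / (A - r) ≤ r / ((4100 / ε) * r) :=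
      div_le_div_of_nonneg_left hr0.le hpos hAr4100
    calc r / (A - r) ≤ r / ((4100 / ε) * r) := h2
    _ = ε / 4100 := by field_simp
  have hRA0 : 0 < R - A := by linarith
  have hAr0 : 0 < A - r := by linarith
  -- rewrite outer integral using the zero coefficient
  have hGcR : ContinuousOn G (sphere (0:ℂ) R) := by
    intro ζ hζ
    rw [mem_sphere, dist_zero_right] at hζ
    exact ((hGd ζ (by rw [hζ]; exact lt_trans hr2r (lt_trans hrA hAR))
      (by rw [hζ]; exact hRR2)).continuousAt).continuousWithinAt
  have hkerR : ∀ ζ : ℂ, ‖ζ‖ = R → (ζ ≠ 0 ∧ ζ - q ≠ 0) := by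
    intro ζ hζ
    constructor
    · intro e; rw [e] at hζ; simp at hζ; linarith
    · intro e
      have : ζ = q := sub_eq_zero.1 e
      rw [this, hArw] at hζ; linarith
  have hint1 : CircleIntegrable (fun ζ => (ζ - q)⁻¹ • G ζ) 0 R := by
    refine ContinuousOn.circleIntegrable hR0.le ?_
    refine ContinuousOn.smul ((continuousOn_id.sub continuousOn_const).inv₀ ?_) hGcR
    intro ζ hζ
    rw [mem_sphere, dist_zero_right] at hζ
    exact (hkerR ζ hζ).2
  have hint3 : CircleIntegrable (fun ζ => ζ⁻¹ • G ζ) 0 R := by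
    refine ContinuousOn.circleIntegrable hR0.le ?_
    refine ContinuousOn.smul (continuousOn_id.inv₀ ?_) hGcR
    intro ζ hζ
    rw [mem_sphere, dist_zero_right] at hζ
    exact (hkerR ζ hζ).1
  have hIRsplit : (∮ ζ in C(0, R), ((ζ - q)⁻¹ - ζ⁻¹) • G ζ)
      = (∮ ζ in C(0, R), (ζ - q)⁻¹ • G ζ) - ∮ ζ in C(0, R), ζ⁻¹ • G ζ := by
    rw [← circleIntegral.integral_sub hint1 hint3]
    apply circleIntegral.integral_congr hR0.le
    intro ζ hζ
    exact sub_smul _ _ _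
  have hIR : (∮ ζ in C(0, R), (ζ - q)⁻¹ • G ζ)
      = ∮ ζ in C(0, R), ((ζ - q)⁻¹ - ζ⁻¹) • G ζ := by
    rw [hIRsplit, hzero, sub_zero]
  -- norm bound on the outer integral
  have houtbound : ‖∮ ζ in C(0, R), ((ζ - q)⁻¹ - ζ⁻¹) • G ζ‖
      ≤ 2 * Real.pi * R * (1025 * (ε/4100) / R) := by
    apply circleIntegral.norm_integral_le_of_norm_le_const hR0.le
    intro ζ hζ
    rw [mem_sphere, dist_zero_right] at hζ
    obtain ⟨hζ0, hζq⟩ := hkerR ζ hζ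
    have hkerid : (ζ - q)⁻¹ - ζ⁻¹ = q / (ζ * (ζ - q)) := by
      field_simp
      ring
    have hlow : R - A ≤ ‖ζ - q‖ := by
      have := norm_sub_norm_le ζ q
      rw [hζ, hArw] at this
      exact this
    have hkernorm : ‖(ζ - q)⁻¹ - ζ⁻¹‖ ≤ A / (R * (R - A)) := by
      rw [hkerid, norm_div, norm_mul, hζ, hArw]
      apply div_le_div_of_nonneg_left hA0.le (by positivity)
      exact mul_le_mul_of_nonneg_left hlow hR0.le
    rw [norm_smul]
    calc ‖(ζ - q)⁻¹ - ζ⁻¹‖ * ‖G ζ‖ ≤ (A / (R * (R - A))) * 1025 := by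
          apply mul_le_mul hkernorm (hGsphR ζ hζ) (norm_nonneg _) (by positivity)
    _ ≤ (ε/4100 / R) * 1025 := by
          apply mul_le_mul_of_nonneg_right _ (by norm_num : (0:ℝ) ≤ 1025)
          rw [show A / (R * (R - A)) = (A / (R - A)) / R by rw [div_div, mul_comm]]
          gcongr
    _ = 1025 * (ε/4100) / R := by ring
  -- norm bound on the inner integral
  have hGcr : ContinuousOn G (sphere (0:ℂ) r) := by
    intro ζ hζ
    rw [mem_sphere, dist_zero_right] at hζ
    exact ((hGd ζ (by rw [hζ]; exact hr2r)
      (by rw [hζ]; exact lt_trans hrA (lt_trans hAR hRR2))).continuousAt).continuousWithinAt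
  have hinbound : ‖∮ ζ in C(0, r), (ζ - q)⁻¹ • G ζ‖
      ≤ 2 * Real.pi * r * (1025 / (A - r)) := by
    apply circleIntegral.norm_integral_le_of_norm_le_const hr0.le
    intro ζ hζ
    rw [mem_sphere, dist_zero_right] at hζ
    have hζq : ‖ζ - q‖ ≥ A - r := by
      have := norm_sub_norm_le q ζ
      rw [hζ, hArw] at this
      calc A - r ≤ ‖q - ζ‖ := this
      _ = ‖ζ - q‖ := norm_sub_rev q ζ
    have hζq0 : ζ - q ≠ 0 := by
      intro e
      rw [e] at hζq
      simp at hζq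
      linarith
    rw [norm_smul, norm_inv]
    calc ‖ζ - q‖⁻¹ * ‖G ζ‖ ≤ (A - r)⁻¹ * 1025 := by
          apply mul_le_mul _ (hGsphr ζ hζ) (norm_nonneg _) (by positivity)
          apply inv_anti₀ hAr0
          exact hζq
    _ = 1025 / (A - r) := by ring
  -- combine
  have hnorm2πI : ‖(2 * Real.pi * Complex.I : ℂ)‖ = 2 * Real.pi := by
    simp [abs_of_pos hπ]
  have hGq : ‖G q‖ ≤ ε / 2 := by
    have h1 : ‖(2 * Real.pi * Complex.I : ℂ) * G q‖ ≤
        2 * Real.pi * R * (1025 * (ε/4100) / R) + 2 * Real.pi * r * (1025 / (A - r)) := by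
      rw [hcauchy, hIR]
      calc ‖(∮ ζ in C(0, R), ((ζ - q)⁻¹ - ζ⁻¹) • G ζ) - ∮ ζ in C(0, r), (ζ - q)⁻¹ • G ζ‖
          ≤ ‖∮ ζ in C(0, R), ((ζ - q)⁻¹ - ζ⁻¹) • G ζ‖ + ‖∮ ζ in C(0, r), (ζ - q)⁻¹ • G ζ‖ :=
            norm_sub_le _ _
      _ ≤ _ := add_le_add houtbound hinbound
    rw [norm_mul, hnorm2πI] at h1
    have h2 : 2 * Real.pi * R * (1025 * (ε/4100) / R) = 2 * Real.pi * (1025 * (ε/4100)) := by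
      field_simp
    have h3 : 2 * Real.pi * r * (1025 / (A - r)) = 2 * Real.pi * (1025 * (r / (A - r))) := by
      field_simp
    rw [h2, h3] at h1
    have h4 : 1025 * (r / (A - r)) ≤ 1025 * (ε / 4100) :=
      mul_le_mul_of_nonneg_left hb2 (by norm_num)
    have h4' := mul_le_mul_of_nonneg_left h4 h2π.le
    have h5 : 2 * Real.pi * ‖G q‖ ≤ 2 * Real.pi * (2 * (1025 * (ε/4100))) := by
      have hexp2 : 2 * Real.pi * (2 * (1025 * (ε/4100)))
          = 2 * Real.pi * (1025 * (ε/4100)) + 2 * Real.pi * (1025 * (ε/4100)) := by ring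
      rw [hexp2]
      linarith
    have h6 : 2 * (1025 * (ε/4100)) = ε / 2 := by ring
    rw [h6] at h5
    exact le_of_mul_le_mul_left h5 (by positivity)
  have hGqval : G q = deriv f z - 1 := stripG_exp hper (by linarith : |z.im| < h)
  rw [← hGqval]
  calc ‖G q‖ ≤ ε / 2 := hGq
  _ < ε := by linarith
end

section
/- Let h > 0 and 0 < r < 1, let f be an injective holomorphic function on the open horizontal strip B_h = {z ∈ ℂ : |Im z| < h} satisfying f(z + 1) = f(z) + 1 for all z ∈ B_h, and let z₀ ∈ ℂ satisfy |Im z₀| + 1/r ≤ h. Then f′(z₀) ≠ 0, and the function g defined on the open unit disk by g(w) = r·(f(z₀ + w/r) − f(z₀))/f′(z₀) is an injective holomorphic function on 𝔻 = {w ∈ ℂ : |w| < 1} with g(0) = 0, g′(0) = 1, and g(r) = r / f′(z₀). -/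
open Metric Complex Filter Set

lemma deriv_ne_zero_of_injOn {S : Set ℂ} (hS : IsOpen S) (f : ℂ → ℂ)
    (hf : DifferentiableOn ℂ f S) (hinj : Set.InjOn f S) {z₀ : ℂ} (hz : z₀ ∈ S) :
    deriv f z₀ ≠ 0 := by
  intro hd
  have hfa : AnalyticAt ℂ f z₀ := hf.analyticAt (hS.mem_nhds hz)
  set F : ℂ → ℂ := fun z => f z - f z₀ with hFdef
  have hFa : AnalyticAt ℂ F z₀ := hfa.sub analyticAt_const
  -- F is not eventually zero
  have hne : ¬ ∀ᶠ z in nhds z₀, F z = 0 := by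
    intro hev
    obtain ⟨t, ht, hto, htz⟩ := _root_.eventually_nhds_iff.mp (hev.and (hS.eventually_mem hz))
    obtain ⟨ε, hε, hball⟩ := Metric.isOpen_iff.mp hto z₀ htz
    have h1 : z₀ + ε/2 ∈ ball z₀ ε := by
      simp [Metric.mem_ball, dist_eq, Complex.norm_real, abs_of_pos hε, half_lt_self hε]
    have h2 := ht _ (hball h1)
    have : f (z₀ + ε/2) = f z₀ := by
      have := h2.1; simpa [hFdef, sub_eq_zero] using this
    have := hinj h2.2 hz this
    have : (ε/2 : ℂ) = 0 := by linear_combination this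
    simp at this
    exact absurd this (by positivity)
  -- order is a finite natural number
  have htop : analyticOrderAt F z₀ ≠ ⊤ := fun h => hne (analyticOrderAt_eq_top.mp h)
  obtain ⟨n, hn⟩ := ENat.ne_top_iff_exists.mp htop
  obtain ⟨g, hg, hg0, hFg⟩ := (hFa.analyticOrderAt_eq_natCast (n := n)).mp hn.symm
  -- n ≠ 0
  have hn0 : n ≠ 0 := by
    intro h
    have := hFg.self_of_nhds
    simp [h, hFdef] at this
    exact hg0 this.symm
  -- n ≠ 1
  have hn1 : n ≠ 1 := by
    intro h
    subst h
    have hG : HasDerivAt (fun z => (z - z₀) ^ 1 • g z) (g z₀) z₀ := by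
      have h1 : HasDerivAt (fun z : ℂ => (z - z₀) ^ 1) 1 z₀ := by
        simpa using ((hasDerivAt_id z₀).sub_const z₀)
      have := h1.smul hg.differentiableAt.hasDerivAt
      simpa only [pow_one, sub_self, zero_smul, one_smul, zero_add, smul_eq_mul, zero_mul, one_mul,
        Pi.mul_def] using this
    have hF' : HasDerivAt F (g z₀) z₀ := hG.congr_of_eventuallyEq hFg
    have : deriv F z₀ = g z₀ := hF'.deriv
    rw [hFdef] at this
    simp [deriv_sub_const, hd] at this
    exact hg0 this.symm
  have hn2 : 2 ≤ n := by omega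
  have hnc : (n : ℂ) ≠ 0 := Nat.cast_ne_zero.mpr hn0
  -- n-th root construction
  set c : ℂ := Complex.exp (Complex.log (g z₀) / n) with hcdef
  have hcn : c ^ n = g z₀ := by
    rw [hcdef, ← Complex.exp_nat_mul, mul_div_cancel₀ _ hnc, Complex.exp_log hg0]
  set u : ℂ → ℂ := fun z => (z - z₀) * (c * Complex.exp (Complex.log (g z / g z₀) / n))
    with hudef
  have hu0 : u z₀ = 0 := by simp [hudef]
  -- eventually g z / g z₀ ∈ slitPlane
  have hsp : ∀ᶠ z in nhds z₀, g z / g z₀ ∈ Complex.slitPlane := by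
    have hcont : ContinuousAt (fun z => g z / g z₀) z₀ :=
      hg.continuousAt.div_const _
    have : Complex.slitPlane ∈ nhds ((fun z => g z / g z₀) z₀) := by
      show Complex.slitPlane ∈ nhds (g z₀ / g z₀)
      rw [div_self hg0]
      exact Complex.isOpen_slitPlane.mem_nhds Complex.one_mem_slitPlane
    exact hcont.eventually_mem this
  -- u is analytic at z₀
  have hua : AnalyticAt ℂ u z₀ := by
    have hdiff : ∀ᶠ z in nhds z₀, DifferentiableAt ℂ u z := by
      filter_upwards [hg.eventually_analyticAt, hsp] with z hza hzs
      have h1 : DifferentiableAt ℂ (fun z => g z / g z₀) z :=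
        hza.differentiableAt.div_const _
      exact ((differentiableAt_id.sub_const z₀).mul
        (((h1.clog hzs).div_const _).cexp.const_mul c))
    obtain ⟨t, ht, hto, htz⟩ := _root_.eventually_nhds_iff.mp hdiff
    exact DifferentiableOn.analyticAt (fun z hz => (ht z hz).differentiableWithinAt)
      (hto.mem_nhds htz)
  -- eventually u z ^ n = F z
  have hupow : ∀ᶠ z in nhds z₀, u z ^ n = F z := by
    filter_upwards [hFg, hsp] with z hz1 hz2
    have hx : g z / g z₀ ≠ 0 := Complex.slitPlane_ne_zero hz2
    have : (Complex.exp (Complex.log (g z / g z₀) / n)) ^ n = g z / g z₀ := by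
      rw [← Complex.exp_nat_mul, mul_div_cancel₀ _ hnc, Complex.exp_log hx]
    rw [hudef]
    simp only [mul_pow, this, hcn]
    rw [hz1, smul_eq_mul]
    field_simp
  -- open mapping for u
  rcases hua.eventually_constant_or_nhds_le_map_nhds with hconst | hmap
  · apply hne
    filter_upwards [hupow, hconst] with z h1 h2
    rw [← h1, h2, hu0, zero_pow hn0]
  · -- build the set t
    have htmem : {z | u z ^ n = F z} ∩ S ∈ nhds z₀ :=
      Filter.inter_mem hupow (hS.mem_nhds hz)
    have himg : u '' ({z | u z ^ n = F z} ∩ S) ∈ nhds (0 : ℂ) := by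
      rw [← hu0]
      apply hmap
      exact Filter.mem_map.mpr (Filter.mem_of_superset htmem (Set.subset_preimage_image _ _))
    obtain ⟨δ, hδ, hball⟩ := Metric.mem_nhds_iff.mp himg
    set ζ : ℂ := Complex.exp (2 * Real.pi * Complex.I / n) with hζdef
    have hζn : ζ ^ n = 1 := by
      rw [hζdef, ← Complex.exp_nat_mul, mul_div_cancel₀ _ hnc, Complex.exp_two_pi_mul_I]
    have hζabs : ‖ζ‖ = 1 := by
      rw [hζdef, Complex.norm_exp]
      have : (2 * Real.pi * Complex.I / n).re = 0 := by
        simp [Complex.div_re]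
      rw [this, Real.exp_zero]
    have hζ1 : ζ ≠ 1 := by
      intro h
      obtain ⟨k, hk⟩ := Complex.exp_eq_one_iff.mp h
      have hk' : 2 * (Real.pi:ℂ) * Complex.I = (k:ℂ) * (2 * Real.pi * Complex.I) * n := by
        field_simp at hk
        linear_combination (2 * (Real.pi:ℂ) * Complex.I) * hk
      have h2 : ((k:ℂ) * n) * (2 * Real.pi * Complex.I) = 1 * (2 * Real.pi * Complex.I) := by
        linear_combination -hk'
      have h3 : (k:ℂ) * n = 1 := mul_right_cancel₀ Complex.two_pi_I_ne_zero h2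
      have h4 : k * (n:ℤ) = 1 := by exact_mod_cast h3
      have h5 : (n:ℤ) ≤ 1 := Int.le_of_dvd one_pos ⟨k, by linear_combination -h4⟩
      have : n ≤ 1 := by exact_mod_cast h5
      omega
    set w : ℂ := ((δ/2 : ℝ) : ℂ) with hwdef
    have hw0 : w ≠ 0 := by
      simp [hwdef]
      positivity
    have hwb : w ∈ ball (0:ℂ) δ := by
      rw [hwdef, Metric.mem_ball, Complex.dist_eq, sub_zero, Complex.norm_real, Real.norm_eq_abs,
        abs_of_pos (by positivity : (0:ℝ) < δ/2)]
      linarith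
    have hζwb : ζ * w ∈ ball (0:ℂ) δ := by
      simp only [Metric.mem_ball, dist_zero_right, norm_mul, hζabs, one_mul]
      simpa [Metric.mem_ball, Complex.dist_eq] using hwb
    obtain ⟨z₁, hz₁, huz₁⟩ := hball hwb
    obtain ⟨z₂, hz₂, huz₂⟩ := hball hζwb
    have hFz₁ : F z₁ = w ^ n := by rw [← hz₁.1, huz₁]
    have hFz₂ : F z₂ = w ^ n := by
      rw [← hz₂.1, huz₂, mul_pow, hζn, one_mul]
    have hfeq : f z₁ = f z₂ := by
      have : F z₁ = F z₂ := by rw [hFz₁, hFz₂]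
      simpa [hFdef, sub_left_inj] using this
    have heq : z₁ = z₂ := hinj hz₁.2 hz₂.2 hfeq
    rw [heq, huz₂] at huz₁
    have : ζ = 1 :=
      mul_right_cancel₀ hw0 (by rw [huz₁, one_mul] : ζ * w = 1 * w)
    exact hζ1 this



/-- Rescaling construction: if `f` is an injective holomorphic function on the strip
`{z : |Im z| < h}` with `f (z + 1) = f z + 1`, and `|Im z₀| + 1/r ≤ h` with `0 < r < 1`,
then `f' z₀ ≠ 0` and `g w = r (f (z₀ + w/r) - f z₀) / f' z₀` is injective holomorphic
on the unit disk with `g 0 = 0`, `g' 0 = 1`, and `g r = r / f' z₀`. -/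
theorem strip_rescaling (h r : ℝ) (hh : 0 < h) (hr0 : 0 < r) (hr1 : r < 1)
    (f : ℂ → ℂ)
    (hf : DifferentiableOn ℂ f {z : ℂ | |z.im| < h})
    (hinj : Set.InjOn f {z : ℂ | |z.im| < h})
    (hper : ∀ z ∈ {z : ℂ | |z.im| < h}, f (z + 1) = f z + 1)
    (z₀ : ℂ) (hz₀ : |z₀.im| + 1 / r ≤ h) :
    deriv f z₀ ≠ 0 ∧
    ∀ g : ℂ → ℂ,
      (∀ w : ℂ, g w = (r : ℂ) * (f (z₀ + w / (r : ℂ)) - f z₀) / deriv f z₀) →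
      DifferentiableOn ℂ g (Metric.ball (0 : ℂ) 1) ∧
      Set.InjOn g (Metric.ball (0 : ℂ) 1) ∧
      g 0 = 0 ∧
      deriv g 0 = 1 ∧
      g (r : ℂ) = (r : ℂ) / deriv f z₀ := by
  have hS : IsOpen {z : ℂ | |z.im| < h} :=
    isOpen_lt (continuous_abs.comp Complex.continuous_im) continuous_const
  have hrpos : (0:ℝ) < 1 / r := by positivity
  have hz₀S : z₀ ∈ {z : ℂ | |z.im| < h} := by
    simp only [Set.mem_setOf_eq]; linarith
  have hrc : (r : ℂ) ≠ 0 := Complex.ofReal_ne_zero.mpr hr0.ne'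
  have hd : deriv f z₀ ≠ 0 := deriv_ne_zero_of_injOn hS f hf hinj hz₀S
  refine ⟨hd, fun g hg => ?_⟩
  have hmem : ∀ w : ℂ, w ∈ Metric.ball (0:ℂ) 1 → z₀ + w / r ∈ {z : ℂ | |z.im| < h} := by
    intro w hw
    have hw1 : ‖w‖ < 1 := by
      simpa [Complex.dist_eq] using Metric.mem_ball.mp hw
    have h3 : ‖w / r‖ = ‖w‖ / r := by
      rw [norm_div, Complex.norm_real, Real.norm_eq_abs, abs_of_pos hr0]
    have h2 : |(w / r).im| ≤ ‖w‖ / r := h3 ▸ Complex.abs_im_le_norm _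
    have h4 : ‖w‖ / r < 1 / r := by gcongr
    simp only [Set.mem_setOf_eq]
    calc |(z₀ + w / r).im| ≤ |z₀.im| + |(w / r).im| := by
          rw [Complex.add_im]; exact abs_add_le _ _
      _ < |z₀.im| + 1 / r := by linarith
      _ ≤ h := hz₀
  -- the affine map and its injectivity
  have hminj : ∀ w₁ w₂ : ℂ, z₀ + w₁ / r = z₀ + w₂ / r → w₁ = w₂ := by
    intro w₁ w₂ hww
    field_simp at hww
    exact add_left_cancel hww
  have hgfun : g = fun w => (r : ℂ) * (f (z₀ + w / (r:ℂ)) - f z₀) / deriv f z₀ :=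
    funext hg
  refine ⟨?_, ?_, ?_, ?_, ?_⟩
  · -- DifferentiableOn
    rw [hgfun]
    intro w hw
    apply DifferentiableAt.differentiableWithinAt
    have hfd : DifferentiableAt ℂ f (z₀ + w / r) :=
      hf.differentiableAt (hS.mem_nhds (hmem w hw))
    have hmd : DifferentiableAt ℂ (fun w : ℂ => z₀ + w / (r:ℂ)) w :=
      (differentiableAt_id.div_const _).const_add _
    exact (((hfd.comp w hmd).sub_const _).const_mul _).div_const _
  · -- InjOn
    intro w₁ hw₁ w₂ hw₂ hgw
    rw [hg w₁, hg w₂] at hgw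
    have : f (z₀ + w₁ / r) = f (z₀ + w₂ / r) := by
      have h1 : (r:ℂ) * (f (z₀ + w₁ / r) - f z₀) = (r:ℂ) * (f (z₀ + w₂ / r) - f z₀) := by
        have := congrArg (fun x => x * deriv f z₀) hgw
        simpa [div_mul_cancel₀, hd] using this
      have h2 := mul_left_cancel₀ hrc h1
      exact sub_left_inj.mp h2

    exact hminj _ _ (hinj (hmem w₁ hw₁) (hmem w₂ hw₂) this)
  · rw [hg 0]; simp
  · -- deriv g 0 = 1
    have hfd : HasDerivAt f (deriv f z₀) z₀ :=
      (hf.differentiableAt (hS.mem_nhds hz₀S)).hasDerivAt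
    have hmd : HasDerivAt (fun w : ℂ => z₀ + w / (r:ℂ)) (1 / r) 0 :=
      ((hasDerivAt_id 0).div_const _).const_add z₀
    have hcomp : HasDerivAt (fun w : ℂ => f (z₀ + w / (r:ℂ)))
        (deriv f z₀ * (1 / r)) 0 := by
      have : HasDerivAt f (deriv f z₀) (z₀ + 0 / (r:ℂ)) := by simpa using hfd
      exact HasDerivAt.comp 0 this hmd
    have hgder : HasDerivAt g 1 0 := by
      rw [hgfun]
      have := ((hcomp.sub_const (f z₀)).const_mul (r:ℂ)).div_const (deriv f z₀)
      refine this.congr_deriv ?_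
      field_simp
    exact hgder.deriv
  · -- g r = r / deriv f z₀
    rw [hg r]
    have : z₀ + (r:ℂ) / (r:ℂ) = z₀ + 1 := by rw [div_self hrc]
    rw [this, hper z₀ hz₀S]
    field_simp
    ring
end

section
/- Let t, s ∈ ℂ with s² = t and 0 < |t| < 1, and define F(w) = (s·e^{2πiw}, s·e^{−2πiw}) for w ∈ ℂ. Then: (i) for every w with |Im w| < (1/(4π))·log(16/|t|), the point F(w) lies in C_t = {(x,y) ∈ ℂ² : x·y = t, |x| < 4, |y| < 4}; (ii) every point of C_t equals F(w) for some w with |Im w| < (1/(4π))·log(16/|t|); and (iii) for w, w′ with |Im w|, |Im w′| < (1/(4π))·log(16/|t|), one has F(w) = F(w′) if and only if w − w′ ∈ ℤ. -/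
open Complex

/-- The map `w ↦ (√t e^{2πiw}, √t e^{-2πiw})` induces an isomorphism of the annulus
`{w : |Im w| < (1/4π) log(16/|t|)}/ℤ` onto the plumbing fiber
`C_t = {(x,y) : xy = t, |x| < 4, |y| < 4}`. -/
theorem plumbing_fiber_parametrization (t s : ℂ) (hs : s ^ 2 = t)
    (ht0 : 0 < ‖t‖) (ht1 : ‖t‖ < 1)
    (F : ℂ → ℂ × ℂ)
    (hF : ∀ w : ℂ, F w = (s * Complex.exp (2 * Real.pi * Complex.I * w),
                          s * Complex.exp (-(2 * Real.pi * Complex.I * w)))) :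
    (∀ w : ℂ, |w.im| < (1 / (4 * Real.pi)) * Real.log (16 / ‖t‖) →
      F w ∈ {p : ℂ × ℂ | p.1 * p.2 = t ∧ ‖p.1‖ < 4 ∧ ‖p.2‖ < 4}) ∧
    (∀ p ∈ {p : ℂ × ℂ | p.1 * p.2 = t ∧ ‖p.1‖ < 4 ∧ ‖p.2‖ < 4},
      ∃ w : ℂ, |w.im| < (1 / (4 * Real.pi)) * Real.log (16 / ‖t‖) ∧ F w = p) ∧
    (∀ w w' : ℂ, |w.im| < (1 / (4 * Real.pi)) * Real.log (16 / ‖t‖) →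
      |w'.im| < (1 / (4 * Real.pi)) * Real.log (16 / ‖t‖) →
      (F w = F w' ↔ ∃ k : ℤ, w - w' = (k : ℂ))) := by
  have hπ : (0:ℝ) < Real.pi := Real.pi_pos
  have ht : t ≠ 0 := by
    intro h; simp [h] at ht0
  have hs0 : s ≠ 0 := by
    intro h; rw [h] at hs; simp at hs; exact ht hs.symm
  have habs : ‖s‖ ^ 2 = ‖t‖ := by rw [← norm_pow, hs]
  have habs_s : ‖s‖ = Real.sqrt (‖t‖) := by
    rw [← habs, Real.sqrt_sq (norm_nonneg s)]
  set L := Real.log (16 / ‖t‖) with hLdef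
  have hL : 0 < L := Real.log_pos (by
    rw [lt_div_iff₀ ht0]; nlinarith)
  have hexpL : Real.exp L = 16 / ‖t‖ := Real.exp_log (by positivity)
  have h2πI : (2 * (Real.pi : ℂ) * I) ≠ 0 := by
    simp [Real.pi_ne_zero, Complex.I_ne_zero, Complex.ofReal_ne_zero]
  have hre : ∀ w : ℂ, (2 * (Real.pi:ℂ) * I * w).re = -(2 * Real.pi * w.im) := by
    intro w
    simp [Complex.mul_re, Complex.mul_im]
  -- key bound
  have key : ∀ r : ℝ, r < L / 2 → Real.sqrt (‖t‖) * Real.exp r < 4 := by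
    intro r hr
    have hsq : (Real.sqrt (‖t‖) * Real.exp r) ^ 2 < 4 ^ 2 := by
      have h1 : (Real.sqrt (‖t‖) * Real.exp r) ^ 2
          = ‖t‖ * Real.exp (r + r) := by
        rw [mul_pow, Real.sq_sqrt ht0.le, Real.exp_add]; ring
      rw [h1]
      have h2 : Real.exp (r + r) < Real.exp L := Real.exp_lt_exp.2 (by linarith)
      have h3 : ‖t‖ * Real.exp (r + r) < ‖t‖ * Real.exp L :=
        mul_lt_mul_of_pos_left h2 ht0
      rw [hexpL] at h3
      calc ‖t‖ * Real.exp (r + r) < ‖t‖ * (16 / ‖t‖) := h3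
        _ = 16 := by field_simp
        _ = 4 ^ 2 := by norm_num
    exact lt_of_pow_lt_pow_left₀ 2 (by norm_num) hsq
  refine ⟨?_, ?_, ?_⟩
  · -- (i)
    intro w hw
    have h2 : 2 * Real.pi * |w.im| < L / 2 := by
      have h := mul_lt_mul_of_pos_left hw (show (0:ℝ) < 2 * Real.pi by positivity)
      have heq : 2 * Real.pi * (1 / (4 * Real.pi) * L) = L / 2 := by field_simp; ring
      linarith
    rw [hF]
    refine ⟨?_, ?_, ?_⟩
    · show s * Complex.exp _ * (s * Complex.exp _) = t
      rw [Complex.exp_neg]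
      field_simp [Complex.exp_ne_zero]
      rw [← hs]
    · show ‖s * Complex.exp _‖ < 4
      rw [norm_mul, Complex.norm_exp, habs_s, hre w]
      apply key
      nlinarith [neg_abs_le w.im, hπ]
    · show ‖s * Complex.exp _‖ < 4
      rw [norm_mul, Complex.norm_exp, habs_s]
      have : (-(2 * (Real.pi:ℂ) * I * w)).re = 2 * Real.pi * w.im := by
        rw [Complex.neg_re, hre w]; ring
      rw [this]
      apply key
      nlinarith [le_abs_self w.im, hπ]
  · -- (ii) surjectivity
    rintro p ⟨hxy, hx, hy⟩
    have hx0 : p.1 ≠ 0 := by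
      intro h; rw [h] at hxy; simp at hxy; exact ht hxy.symm
    have hxpos : 0 < ‖p.1‖ := norm_pos_iff.mpr hx0
    set z := p.1 / s with hz
    have hz0 : z ≠ 0 := div_ne_zero hx0 hs0
    refine ⟨Complex.log z / (2 * (Real.pi:ℂ) * I), ?_, ?_⟩
    · -- imaginary part bound
      have him : (Complex.log z / (2 * (Real.pi:ℂ) * I)).im
          = -(Real.log (‖z‖)) / (2 * Real.pi) := by
        rw [Complex.div_im]
        simp [Complex.normSq_apply, Complex.log_re]
        field_simp
      have hzabs : ‖z‖ = ‖p.1‖ / Real.sqrt (‖t‖) := by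
        rw [hz, norm_div, habs_s]
      have hsqrt0 : Real.sqrt (‖t‖) ≠ 0 := by positivity
      have hlogz : Real.log (‖z‖)
          = Real.log (‖p.1‖) - Real.log (‖t‖) / 2 := by
        rw [hzabs, Real.log_div hxpos.ne' hsqrt0, Real.log_sqrt ht0.le]
      have hLeq : L = Real.log 16 - Real.log (‖t‖) :=
        Real.log_div (by norm_num) ht0.ne'
      have hlog16 : Real.log 16 = 2 * Real.log 4 := by
        rw [show (16:ℝ) = 4 ^ 2 by norm_num, Real.log_pow]; push_cast; ring
      have hub : Real.log (‖p.1‖) < Real.log 4 := Real.log_lt_log hxpos hx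
      have hlb : Real.log (‖t‖) - Real.log 4 < Real.log (‖p.1‖) := by
        have habs_t : ‖t‖ = ‖p.1‖ * ‖p.2‖ := by
          rw [← hxy, norm_mul]
        have hdiv : ‖t‖ / 4 < ‖p.1‖ := by
          rw [div_lt_iff₀ (by norm_num : (0:ℝ) < 4)]
          nlinarith [norm_nonneg p.2]
        have := Real.log_lt_log (by positivity) hdiv
        rw [Real.log_div ht0.ne' (by norm_num : (4:ℝ) ≠ 0)] at this
        linarith
      have hfin : |Real.log (‖z‖)| < L / 2 := by
        rw [hlogz, abs_lt]
        constructor <;> [linarith; linarith]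
      rw [him, abs_div, abs_neg, abs_of_pos (show (0:ℝ) < 2 * Real.pi by positivity),
        div_lt_iff₀ (show (0:ℝ) < 2 * Real.pi by positivity)]
      have heq : 1 / (4 * Real.pi) * L * (2 * Real.pi) = L / 2 := by field_simp; ring
      linarith
    · -- F w = p
      have hA : 2 * (Real.pi:ℂ) * I * (Complex.log z / (2 * (Real.pi:ℂ) * I))
          = Complex.log z := by field_simp
      rw [hF, hA, Complex.exp_log hz0, Complex.exp_neg, Complex.exp_log hz0]
      have h1 : s * z = p.1 := by rw [hz]; field_simp
      have h2 : s * z⁻¹ = p.2 := by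
        rw [hz]
        field_simp
        linear_combination hs - hxy
      rw [h1, h2]
  · -- (iii)
    intro w w' _ _
    constructor
    · intro h
      rw [hF w, hF w'] at h
      have h1 : s * Complex.exp (2 * (Real.pi:ℂ) * I * w)
          = s * Complex.exp (2 * (Real.pi:ℂ) * I * w') := congrArg Prod.fst h
      have h2 := mul_left_cancel₀ hs0 h1
      rw [Complex.exp_eq_exp_iff_exists_int] at h2
      obtain ⟨n, hn⟩ := h2
      refine ⟨n, ?_⟩
      apply mul_left_cancel₀ h2πI
      linear_combination hn
    · rintro ⟨k, hk⟩
      rw [hF w, hF w']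
      have he : Complex.exp (2 * (Real.pi:ℂ) * I * w)
          = Complex.exp (2 * (Real.pi:ℂ) * I * w') := by
        rw [show (2 * (Real.pi:ℂ) * I * w) = 2 * (Real.pi:ℂ) * I * w' + k * (2 * Real.pi * I) by
          linear_combination (2 * (Real.pi:ℂ) * I) * hk]
        rw [Complex.exp_add, Complex.exp_int_mul_two_pi_mul_I, mul_one]
      rw [he, Complex.exp_neg, Complex.exp_neg, he]
end
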